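/- Let F be a number field or a global function field, X = Spec(O_F), and for each nonempty open subscheme U ⊆ X define the relative idele group I(U⊂X) = ⊕_{x∈|U|} ℤ ⊕ ⊕_{v∈X∖U} F_v^× (with F_v the henselization of F at v, direct sum topology). Then the natural map from the classical restricted-product idele group I_c(F) = colim_S (∏_{v∈S} F_v^× × ∏_{v∉S} O_{F_v}^×) to the inverse limit I(F) = lim_U I(U⊂X) is an isomorphism of topological groups. -/

import Mathlib

open IsDedekindDomain Multiplicative WithZero
open scoped Classical

noncomputable section

variable {A : Type*} [CommRing A] [IsDedekindDomain A]
variable {F : Type*} [Field F] [Algebra A F] [IsFractionRing A F]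
variable (Fv : HeightOneSpectrum A → Type*) [∀ v, Field (Fv v)] [∀ v, Algebra F (Fv v)]
variable [∀ v, Valued (Fv v) (WithZero (Multiplicative ℤ))]

/-- The normalized `ℤ`-valued valuation of a unit of the discretely valued field `Fv v`. -/
def valUnit (v : HeightOneSpectrum A) (x : (Fv v)ˣ) : ℤ :=
  - Multiplicative.toAdd (WithZero.unzero
    ((Valuation.ne_zero_iff (Valued.v : Valuation (Fv v) (WithZero (Multiplicative ℤ)))).2
      x.ne_zero))

/-- The classical (henselian, finite) idele group as a subgroup of `Π_v F_v^×`: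
families of units which lie in `O_{F_v}^×` (valuation `1`) for all but finitely many `v`.
This is `I_c(F) = colim_S ∏_{v∈S} F_v^× × ∏_{v∉S} O_{F_v}^×` as a group. -/
def IcSub : Subgroup (Π v, (Fv v)ˣ) where
  carrier := {x | {v | (Valued.v ((x v : Fv v)) : WithZero (Multiplicative ℤ)) ≠ 1}.Finite}
  mul_mem' := by
    intro x y hx hy
    refine Set.Finite.subset (hx.union hy) fun v hv => ?_
    by_contra h
    simp only [Set.mem_union, Set.mem_setOf_eq, not_or, not_not] at h
    exact hv (by simp [Units.val_mul, map_mul, h.1, h.2])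
  one_mem' := by
    refine Set.Finite.subset (Set.finite_empty) fun v hv => ?_
    exact hv (by simp)
  inv_mem' := by
    intro x hx
    refine Set.Finite.subset hx fun v hv => ?_
    simp only [Set.mem_setOf_eq] at hv ⊢
    intro h
    apply hv
    rw [Pi.inv_apply, Units.val_inv_eq_inv_val, map_inv₀, h, inv_one]

/-- The classical idele group `I_c(F)`. -/
def Ic : Type _ := ↥(IcSub Fv)

instance : CommGroup (Ic Fv) := inferInstanceAs (CommGroup ↥(IcSub Fv))

/-- The underlying family of units of a classical idele. -/
def Ic.comp (x : Ic Fv) : Π v, (Fv v)ˣ := (show ↥(IcSub Fv) from x).1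

/-- The restricted product topology on `I_c(F)`: basic open sets are given by a finite
set `S` of places, arbitrary open conditions at `v ∈ S`, and the integral-unit condition
at `v ∉ S`.  (This is the direct limit topology of `(\ref{clidele})`.) -/
instance : TopologicalSpace (Ic Fv) :=
  TopologicalSpace.generateFrom
    {s | ∃ (S : Finset (HeightOneSpectrum A)) (W : ∀ v, Set ((Fv v)ˣ)),
      (∀ v, IsOpen (W v)) ∧
      s = {x : Ic Fv | (∀ v ∈ S, Ic.comp Fv x v ∈ W v) ∧
        ∀ v ∉ S, (Valued.v ((Ic.comp Fv x v : Fv v)) : WithZero (Multiplicative ℤ)) = 1}}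

/-- The `⊕_{x ∈ |U|} ℤ` part of the relative idele group `I(U ⊂ X)`, for `U` the
complement of the finite set `D` of places: finitely supported `ℤ`-valued functions on
the places, supported away from `D`. -/
def ZSgrp (D : Finset (HeightOneSpectrum A)) : AddSubgroup (HeightOneSpectrum A → ℤ) where
  carrier := {f | (Function.support f).Finite ∧ ∀ v ∈ D, f v = 0}
  add_mem' := by
    intro f g hf hg
    exact ⟨Set.Finite.subset (hf.1.union hg.1) (Function.support_add f g),
      fun v hv => by simp [hf.2 v hv, hg.2 v hv]⟩
  zero_mem' := by constructor <;> simp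
  neg_mem' := by
    intro f hf
    exact ⟨Set.Finite.subset hf.1 (by simp [Function.support_neg]),
      fun v hv => by simp [hf.2 v hv]⟩

/-- The `⊕ℤ` part as a type; it carries the direct sum topology, which is discrete. -/
def ZSpart (D : Finset (HeightOneSpectrum A)) : Type _ := ↥(ZSgrp (A := A) D)

instance (D : Finset (HeightOneSpectrum A)) : AddCommGroup (ZSpart (A := A) D) :=
  inferInstanceAs (AddCommGroup ↥(ZSgrp (A := A) D))

instance (D : Finset (HeightOneSpectrum A)) : TopologicalSpace (ZSpart (A := A) D) := ⊥

/-- The underlying function of an element of the `⊕ℤ` part. -/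
def ZSpart.f {D : Finset (HeightOneSpectrum A)} (g : ZSpart (A := A) D) :
    HeightOneSpectrum A → ℤ := (show ↥(ZSgrp (A := A) D) from g).1

lemma ZSpart.finite {D : Finset (HeightOneSpectrum A)} (g : ZSpart (A := A) D) :
    (Function.support (ZSpart.f g)).Finite :=
  (show (Function.support (ZSpart.f g)).Finite ∧ ∀ v ∈ D, ZSpart.f g v = 0 from
    (show ↥(ZSgrp (A := A) D) from g).2).1

lemma ZSpart.vanish {D : Finset (HeightOneSpectrum A)} (g : ZSpart (A := A) D) :
    ∀ v ∈ D, ZSpart.f g v = 0 :=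
  (show (Function.support (ZSpart.f g)).Finite ∧ ∀ v ∈ D, ZSpart.f g v = 0 from
    (show ↥(ZSgrp (A := A) D) from g).2).2

/-- The `⊕_{v ∈ D} F_v^×` part of the relative idele group `I(U ⊂ X)`: families of units
which are trivial away from the finite set `D`; as `D` is finite the direct sum topology
is the product topology. -/
def GDgrp (D : Finset (HeightOneSpectrum A)) : Subgroup (Π v, (Fv v)ˣ) where
  carrier := {x | ∀ v ∉ D, x v = 1}
  mul_mem' := by intro x y hx hy v hv; simp [hx v hv, hy v hv]
  one_mem' := by intro v hv; rfl
  inv_mem' := by intro x hx v hv; simp [hx v hv]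

/-- The relative idele group `I(U ⊂ X) = ⊕_{x∈|U|} ℤ ⊕ ⊕_{v∈D} F_v^×` (written
additively), `U = X ∖ D`, with the direct sum topology. -/
def IDgrp (D : Finset (HeightOneSpectrum A)) : Type _ :=
  Additive ↥(GDgrp Fv D) × ZSpart (A := A) D

instance (D : Finset (HeightOneSpectrum A)) : AddCommGroup (IDgrp Fv D) :=
  inferInstanceAs (AddCommGroup (Additive ↥(GDgrp Fv D) × ZSpart (A := A) D))

instance (D : Finset (HeightOneSpectrum A)) : TopologicalSpace (IDgrp Fv D) :=
  inferInstanceAs (TopologicalSpace (Additive ↥(GDgrp Fv D) × ZSpart (A := A) D))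

/-- Constructor for elements of `I(U ⊂ X)`. -/
def IDgrp.mk {D : Finset (HeightOneSpectrum A)} (g : ↥(GDgrp Fv D))
    (z : ZSpart (A := A) D) : IDgrp Fv D := (Additive.ofMul g, z)

/-- The units component of an element of `I(U ⊂ X)`. -/
def IDgrp.g {D : Finset (HeightOneSpectrum A)} (x : IDgrp Fv D) : Π v, (Fv v)ˣ :=
  ((Additive.toMul (show Additive ↥(GDgrp Fv D) × ZSpart (A := A) D from x).1 :
    ↥(GDgrp Fv D)) : Π v, (Fv v)ˣ)

/-- The `⊕ℤ` component of an element of `I(U ⊂ X)`. -/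
def IDgrp.z {D : Finset (HeightOneSpectrum A)} (x : IDgrp Fv D) :
    HeightOneSpectrum A → ℤ :=
  ZSpart.f (show Additive ↥(GDgrp Fv D) × ZSpart (A := A) D from x).2

lemma IDgrp.g_one {D : Finset (HeightOneSpectrum A)} (x : IDgrp Fv D) :
    ∀ v ∉ D, IDgrp.g Fv x v = 1 :=
  (show Additive ↥(GDgrp Fv D) × ZSpart (A := A) D from x).1.2

lemma IDgrp.z_finite {D : Finset (HeightOneSpectrum A)} (x : IDgrp Fv D) :
    (Function.support (IDgrp.z Fv x)).Finite :=
  ZSpart.finite _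

/-- The transition map `I(U' ⊂ X) → I(U ⊂ X)` for `U' ⊆ U`, i.e. `D ⊆ D'`: units at the
places of `D' ∖ D` are sent to their valuations in `ℤ`. -/
def idTrans {D D' : Finset (HeightOneSpectrum A)} (_ : D ⊆ D') (x : IDgrp Fv D') :
    IDgrp Fv D :=
  IDgrp.mk Fv
    (⟨fun v => if v ∈ D then IDgrp.g Fv x v else 1, fun v hv => by simp [hv]⟩)
    (⟨fun v => if v ∈ D then 0
        else if v ∈ D' then valUnit Fv v (IDgrp.g Fv x v)
        else IDgrp.z Fv x v, by
      constructor
      · refine Set.Finite.subset (D'.finite_toSet.union (IDgrp.z_finite Fv x)) fun v hv => ?_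
        simp only [Function.mem_support] at hv
        by_cases h1 : v ∈ D
        · simp [h1] at hv
        · by_cases h2 : v ∈ D'
          · exact Or.inl h2
          · right
            simp only [h1, h2, if_false] at hv
            exact hv
      · intro v hv
        simp [hv]⟩)

/-- The idele group `I(F) = lim_U I(U ⊂ X)`, inverse limit over all nonempty open
subschemes `U = X ∖ D`, with the inverse limit topology. -/
def Ilim : Type _ :=
  {φ : Π D : Finset (HeightOneSpectrum A), IDgrp Fv D //
    ∀ (D D' : Finset (HeightOneSpectrum A)) (h : D ⊆ D'), idTrans Fv h (φ D') = φ D}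

instance : TopologicalSpace (Ilim Fv) :=
  inferInstanceAs (TopologicalSpace
    {φ : Π D : Finset (HeightOneSpectrum A), IDgrp Fv D //
      ∀ (D D' : Finset (HeightOneSpectrum A)) (h : D ⊆ D'), idTrans Fv h (φ D') = φ D})

/-- Evaluation of an element of the inverse limit `I(F)` at the level `U = X ∖ D`. -/
def Ilim.at (φ : Ilim Fv) (D : Finset (HeightOneSpectrum A)) : IDgrp Fv D :=
  (show {φ : Π D : Finset (HeightOneSpectrum A), IDgrp Fv D //
    ∀ (D D' : Finset (HeightOneSpectrum A)) (h : D ⊆ D'), idTrans Fv h (φ D') = φ D}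
    from φ).1 D

/-! ### Auxiliary lemmas for the proof -/

lemma valUnit_spec (v : HeightOneSpectrum A) (u : (Fv v)ˣ) :
    (Valued.v ((u : Fv v)) : WithZero (Multiplicative ℤ)) =
      ↑(Multiplicative.ofAdd (-(valUnit Fv v u))) := by
  rw [valUnit, neg_neg, ofAdd_toAdd, WithZero.coe_unzero]

lemma valued_eq_one_iff (v : HeightOneSpectrum A) (u : (Fv v)ˣ) :
    (Valued.v ((u : Fv v)) : WithZero (Multiplicative ℤ)) = 1 ↔ valUnit Fv v u = 0 := by
  rw [valUnit_spec, ← WithZero.coe_one, WithZero.coe_inj]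
  constructor
  · intro h
    have := Multiplicative.ofAdd.injective (h.trans ofAdd_zero.symm)
    linarith
  · intro h; rw [h]; simp

lemma valued_eq_iff (v : HeightOneSpectrum A) (u w : (Fv v)ˣ) :
    ((Valued.v ((u : Fv v)) : WithZero (Multiplicative ℤ)) = Valued.v ((w : Fv v))) ↔
      valUnit Fv v u = valUnit Fv v w := by
  rw [valUnit_spec, valUnit_spec, WithZero.coe_inj]
  constructor
  · intro h
    have := Multiplicative.ofAdd.injective h
    linarith
  · intro h; rw [h]

lemma valUnit_mul (v : HeightOneSpectrum A) (a b : (Fv v)ˣ) :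
    valUnit Fv v (a * b) = valUnit Fv v a + valUnit Fv v b := by
  have h := valUnit_spec Fv v (a * b)
  rw [Units.val_mul, map_mul, valUnit_spec Fv v a, valUnit_spec Fv v b, ← WithZero.coe_mul,
    WithZero.coe_inj, ← ofAdd_add] at h
  have := Multiplicative.ofAdd.injective h
  linarith

lemma isOpen_sphere (v : HeightOneSpectrum A) (b : (Fv v)ˣ) :
    IsOpen {u : (Fv v)ˣ | (Valued.v ((u : Fv v)) : WithZero (Multiplicative ℤ)) =
      Valued.v ((b : Fv v))} := by
  have hb : (Valued.v ((b : Fv v)) : WithZero (Multiplicative ℤ)) ≠ 0 :=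
    (Valuation.ne_zero_iff _).2 b.ne_zero
  have h1 : IsOpen {a : Fv v |
      (Valued.v a : WithZero (Multiplicative ℤ)) = Valued.v ((b : Fv v))} := by
    rw [isOpen_iff_mem_nhds]
    intro a ha
    simp only [Set.mem_setOf_eq] at ha
    have hl := Valued.locally_const (R := Fv v) (x := a) (by rw [ha]; exact hb)
    rw [ha] at hl
    exact hl
  exact h1.preimage Units.continuous_val

lemma Ic.finite (x : Ic Fv) :
    {v | (Valued.v ((Ic.comp Fv x v : Fv v)) : WithZero (Multiplicative ℤ)) ≠ 1}.Finite :=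
  (show ↥(IcSub Fv) from x).2

lemma Ic.comp_mul (x y : Ic Fv) (v : HeightOneSpectrum A) :
    Ic.comp Fv (x * y) v = Ic.comp Fv x v * Ic.comp Fv y v := rfl

/-- The finite set of places where a classical idele is not a unit integrally. -/
def suppF (x : Ic Fv) : Finset (HeightOneSpectrum A) := (Ic.finite Fv x).toFinset

lemma mem_suppF (x : Ic Fv) (v : HeightOneSpectrum A) :
    v ∈ suppF Fv x ↔
      (Valued.v ((Ic.comp Fv x v : Fv v)) : WithZero (Multiplicative ℤ)) ≠ 1 :=
  Set.Finite.mem_toFinset _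

lemma IDext {D : Finset (HeightOneSpectrum A)} {p q : IDgrp Fv D}
    (hg : ∀ v, IDgrp.g Fv p v = IDgrp.g Fv q v)
    (hz : ∀ v, IDgrp.z Fv p v = IDgrp.z Fv q v) : p = q := by
  obtain ⟨a, z⟩ := p
  obtain ⟨b, w⟩ := q
  exact Prod.ext (congrArg Additive.ofMul (Subtype.ext (funext hg)))
    (Subtype.ext (funext hz))

lemma g_idTrans {D D' : Finset (HeightOneSpectrum A)} (h : D ⊆ D') (x : IDgrp Fv D')
    (v : HeightOneSpectrum A) :
    IDgrp.g Fv (idTrans Fv h x) v = if v ∈ D then IDgrp.g Fv x v else 1 := rfl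

lemma z_idTrans {D D' : Finset (HeightOneSpectrum A)} (h : D ⊆ D') (x : IDgrp Fv D')
    (v : HeightOneSpectrum A) :
    IDgrp.z Fv (idTrans Fv h x) v = if v ∈ D then 0
      else if v ∈ D' then valUnit Fv v (IDgrp.g Fv x v) else IDgrp.z Fv x v := rfl

lemma z_zero_of_mem {D : Finset (HeightOneSpectrum A)} (x : IDgrp Fv D)
    {v : HeightOneSpectrum A} (hv : v ∈ D) : IDgrp.z Fv x v = 0 :=
  ZSpart.vanish (show Additive ↥(GDgrp Fv D) × ZSpart (A := A) D from x).2 v hv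

lemma Ilim.compat (φ : Ilim Fv) {D D' : Finset (HeightOneSpectrum A)} (h : D ⊆ D') :
    idTrans Fv h (Ilim.at Fv φ D') = Ilim.at Fv φ D :=
  (show {φ : Π D : Finset (HeightOneSpectrum A), IDgrp Fv D //
    ∀ (D D' : Finset (HeightOneSpectrum A)) (h : D ⊆ D'), idTrans Fv h (φ D') = φ D}
    from φ).2 D D' h

lemma Ilim.g_compat (φ : Ilim Fv) {D D' : Finset (HeightOneSpectrum A)} (h : D ⊆ D')
    (v : HeightOneSpectrum A) :
    IDgrp.g Fv (Ilim.at Fv φ D) v =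
      if v ∈ D then IDgrp.g Fv (Ilim.at Fv φ D') v else 1 := by
  rw [← Ilim.compat Fv φ h, g_idTrans]

lemma Ilim.z_compat (φ : Ilim Fv) {D D' : Finset (HeightOneSpectrum A)} (h : D ⊆ D')
    (v : HeightOneSpectrum A) :
    IDgrp.z Fv (Ilim.at Fv φ D) v = if v ∈ D then 0
      else if v ∈ D' then valUnit Fv v (IDgrp.g Fv (Ilim.at Fv φ D') v)
      else IDgrp.z Fv (Ilim.at Fv φ D') v := by
  rw [← Ilim.compat Fv φ h, z_idTrans]

lemma g_at_eq (φ : Ilim Fv) (D : Finset (HeightOneSpectrum A)) {v : HeightOneSpectrum A}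
    (hv : v ∈ D) :
    IDgrp.g Fv (Ilim.at Fv φ {v}) v = IDgrp.g Fv (Ilim.at Fv φ D) v := by
  rw [Ilim.g_compat Fv φ (Finset.singleton_subset_iff.2 hv) v, if_pos (Finset.mem_singleton_self v)]

lemma z_at_eq (φ : Ilim Fv) (D : Finset (HeightOneSpectrum A)) {v : HeightOneSpectrum A}
    (hv : v ∉ D) :
    IDgrp.z Fv (Ilim.at Fv φ D) v = valUnit Fv v (IDgrp.g Fv (Ilim.at Fv φ {v}) v) := by
  have h1 := Ilim.z_compat Fv φ (Finset.subset_union_left : D ⊆ D ∪ {v}) v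
  have h2 := g_at_eq Fv φ (D ∪ {v}) (v := v) (by simp)
  simp only [hv, if_false, Finset.mem_union, Finset.mem_singleton, or_true, if_true] at h1
  rw [h1, h2]

/-- The units component of the natural map at level `D`. -/
def icG (x : Ic Fv) (D : Finset (HeightOneSpectrum A)) : ↥(GDgrp Fv D) :=
  ⟨fun v => if v ∈ D then Ic.comp Fv x v else 1, fun v hv => by simp [hv]⟩

/-- The `⊕ℤ` component of the natural map at level `D`. -/
def icZ (x : Ic Fv) (D : Finset (HeightOneSpectrum A)) : ZSpart (A := A) D :=
  ⟨fun v => if v ∈ D then 0 else valUnit Fv v (Ic.comp Fv x v), by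
    refine ⟨Set.Finite.subset (Ic.finite Fv x) fun v hv => ?_, fun v hv => by simp [hv]⟩
    simp only [Function.mem_support] at hv
    by_cases h : v ∈ D
    · simp [h] at hv
    · simp only [h, if_false] at hv
      simp only [Set.mem_setOf_eq]
      intro h1
      exact hv ((valued_eq_one_iff Fv v _).1 h1)⟩

/-- The natural map at level `D`. -/
def icFun (x : Ic Fv) (D : Finset (HeightOneSpectrum A)) : IDgrp Fv D :=
  IDgrp.mk Fv (icG Fv x D) (icZ Fv x D)

lemma g_icFun (x : Ic Fv) (D : Finset (HeightOneSpectrum A)) (v : HeightOneSpectrum A) :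
    IDgrp.g Fv (icFun Fv x D) v = if v ∈ D then Ic.comp Fv x v else 1 := rfl

lemma z_icFun (x : Ic Fv) (D : Finset (HeightOneSpectrum A)) (v : HeightOneSpectrum A) :
    IDgrp.z Fv (icFun Fv x D) v =
      if v ∈ D then 0 else valUnit Fv v (Ic.comp Fv x v) := rfl

/-- The natural map `e : I_c(F) → I(F)`. -/
def eMap (x : Ic Fv) : Ilim Fv :=
  ⟨fun D => icFun Fv x D, by
    intro D D' h
    refine IDext Fv (fun v => ?_) (fun v => ?_)
    · rw [g_idTrans]
      by_cases hv : v ∈ D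
      · simp [hv, g_icFun, h hv]
      · simp [hv, g_icFun]
    · rw [z_idTrans]
      by_cases hv : v ∈ D
      · simp [hv, z_icFun]
      · by_cases hv' : v ∈ D'
        · simp [hv, hv', z_icFun, g_icFun]
        · simp [hv, hv', z_icFun]⟩

lemma at_eMap (x : Ic Fv) (D : Finset (HeightOneSpectrum A)) :
    Ilim.at Fv (eMap Fv x) D = icFun Fv x D := rfl

lemma einv_mem (φ : Ilim Fv) :
    {v | (Valued.v ((IDgrp.g Fv (Ilim.at Fv φ {v}) v : Fv v)) :
      WithZero (Multiplicative ℤ)) ≠ 1}.Finite := by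
  refine Set.Finite.subset (IDgrp.z_finite Fv (Ilim.at Fv φ ∅)) fun v hv => ?_
  simp only [Set.mem_setOf_eq] at hv
  rw [Function.mem_support, z_at_eq Fv φ ∅ (Finset.notMem_empty v)]
  intro h0
  exact hv ((valued_eq_one_iff Fv v _).2 h0)

/-- The inverse of the natural map. -/
def einv (φ : Ilim Fv) : Ic Fv :=
  ⟨fun v => IDgrp.g Fv (Ilim.at Fv φ {v}) v, einv_mem Fv φ⟩

lemma comp_einv (φ : Ilim Fv) (v : HeightOneSpectrum A) :
    Ic.comp Fv (einv Fv φ) v = IDgrp.g Fv (Ilim.at Fv φ {v}) v := rfl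

lemma einv_eMap (x : Ic Fv) : einv Fv (eMap Fv x) = x := by
  refine Subtype.ext (funext fun v => ?_)
  show IDgrp.g Fv (icFun Fv x {v}) v = Ic.comp Fv x v
  rw [g_icFun]
  simp

lemma eMap_einv (φ : Ilim Fv) : eMap Fv (einv Fv φ) = φ := by
  refine Subtype.ext (funext fun D => ?_)
  show icFun Fv (einv Fv φ) D = Ilim.at Fv φ D
  refine IDext Fv (fun v => ?_) (fun v => ?_)
  · rw [g_icFun]
    by_cases hv : v ∈ D
    · rw [if_pos hv, comp_einv, g_at_eq Fv φ D hv]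
    · rw [if_neg hv, IDgrp.g_one Fv (Ilim.at Fv φ D) v hv]
  · rw [z_icFun]
    by_cases hv : v ∈ D
    · rw [if_pos hv, z_zero_of_mem Fv (Ilim.at Fv φ D) hv]
    · rw [if_neg hv, comp_einv, z_at_eq Fv φ D hv]

/-! ### Topological lemmas -/

instance (D : Finset (HeightOneSpectrum A)) : DiscreteTopology (ZSpart (A := A) D) := ⟨rfl⟩

lemma isOpen_basic (S : Finset (HeightOneSpectrum A)) (W : ∀ v, Set ((Fv v)ˣ))
    (hW : ∀ v, IsOpen (W v)) :
    IsOpen {x : Ic Fv | (∀ v ∈ S, Ic.comp Fv x v ∈ W v) ∧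
      ∀ v ∉ S, (Valued.v ((Ic.comp Fv x v : Fv v)) : WithZero (Multiplicative ℤ)) = 1} :=
  TopologicalSpace.isOpen_generateFrom_of_mem ⟨S, W, hW, rfl⟩

lemma continuous_comp_eval (v : HeightOneSpectrum A) :
    Continuous fun x : Ic Fv => Ic.comp Fv x v := by
  rw [continuous_def]
  intro W hW
  rw [isOpen_iff_forall_mem_open]
  intro x hx
  refine ⟨{y : Ic Fv | (∀ w ∈ insert v (suppF Fv x), Ic.comp Fv y w ∈
      {u : (Fv w)ˣ | ∀ h : w = v, h ▸ u ∈ W}) ∧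
      ∀ w ∉ insert v (suppF Fv x),
        (Valued.v ((Ic.comp Fv y w : Fv w)) : WithZero (Multiplicative ℤ)) = 1},
    ?_, isOpen_basic Fv _ _ (fun w => ?_), ?_⟩
  · intro y hy
    exact hy.1 v (Finset.mem_insert_self v _) rfl
  · by_cases h : w = v
    · subst h
      have : {u : (Fv w)ˣ | ∀ h : w = w, h ▸ u ∈ W} = W := by
        ext u
        exact ⟨fun H => H rfl, fun hu h => hu⟩
      rw [this]; exact hW
    · have : {u : (Fv w)ˣ | ∀ h : w = v, h ▸ u ∈ W} = Set.univ := by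
        ext u
        simp only [Set.mem_setOf_eq, Set.mem_univ, iff_true]
        intro h'; exact absurd h' h
      rw [this]; exact isOpen_univ
  · refine ⟨fun w _ h => ?_, fun w hw => ?_⟩
    · subst h; exact hx
    · have : w ∉ suppF Fv x := fun h => hw (Finset.mem_insert_of_mem h)
      rw [mem_suppF] at this
      exact not_not.1 this

lemma isOpen_zfiber (D : Finset (HeightOneSpectrum A)) (z : ZSpart (A := A) D) :
    IsOpen {x : Ic Fv | icZ Fv x D = z} := by
  rw [isOpen_iff_forall_mem_open]
  intro x hx
  have hx' : ∀ v, (if v ∈ D then 0 else valUnit Fv v (Ic.comp Fv x v)) = ZSpart.f z v :=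
    fun v => congrFun (congrArg (ZSpart.f (A := A)) hx) v
  refine ⟨{y : Ic Fv | (∀ w ∈ D ∪ suppF Fv x, Ic.comp Fv y w ∈
      {u : (Fv w)ˣ | (Valued.v ((u : Fv w)) : WithZero (Multiplicative ℤ)) =
        Valued.v ((Ic.comp Fv x w : Fv w))}) ∧
      ∀ w ∉ D ∪ suppF Fv x,
        (Valued.v ((Ic.comp Fv y w : Fv w)) : WithZero (Multiplicative ℤ)) = 1},
    ?_, isOpen_basic Fv _ _ (fun w => isOpen_sphere Fv w _), ?_⟩
  · intro y hy
    refine Subtype.ext (funext fun v => ?_)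
    show (if v ∈ D then 0 else valUnit Fv v (Ic.comp Fv y v)) = ZSpart.f z v
    have h' := hx' v
    by_cases h : v ∈ D
    · rw [if_pos h]; rw [if_pos h] at h'; exact h'
    · rw [if_neg h]; rw [if_neg h] at h'
      by_cases h2 : v ∈ D ∪ suppF Fv x
      · have hvy := hy.1 v h2
        simp only [Set.mem_setOf_eq] at hvy
        rw [(valued_eq_iff Fv v _ _).1 hvy]
        exact h'
      · have h3 : v ∉ suppF Fv x := fun hc => h2 (Finset.mem_union_right _ hc)
        rw [mem_suppF, not_not] at h3
        rw [(valued_eq_one_iff Fv v _).1 (hy.2 v h2), ← h',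
          (valued_eq_one_iff Fv v _).1 h3]
  · refine ⟨fun w _ => rfl, fun w hw => ?_⟩
    have : w ∉ suppF Fv x := fun h => hw (Finset.mem_union_right _ h)
    rw [mem_suppF, not_not] at this
    exact this

lemma continuous_eMap : Continuous (eMap Fv) := by
  apply Continuous.subtype_mk
  apply continuous_pi
  intro D
  show Continuous fun x : Ic Fv =>
    ((Additive.ofMul (icG Fv x D), icZ Fv x D) :
      Additive ↥(GDgrp Fv D) × ZSpart (A := A) D)
  refine Continuous.prodMk ?_ ?_
  · refine continuous_ofMul.comp ?_
    refine Continuous.subtype_mk ?_ _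
    apply continuous_pi
    intro w
    show Continuous fun x : Ic Fv => if w ∈ D then Ic.comp Fv x w else 1
    by_cases h : w ∈ D
    · simp only [h, if_true]
      exact continuous_comp_eval Fv w
    · simp only [h, if_false]
      exact continuous_const
  · rw [continuous_discrete_rng]
    intro z
    exact isOpen_zfiber Fv D z

lemma continuous_einv : Continuous (einv Fv) := by
  apply continuous_generateFrom_iff.mpr
  rintro s ⟨S, W, hW, rfl⟩
  have hset : einv Fv ⁻¹' {x : Ic Fv | (∀ v ∈ S, Ic.comp Fv x v ∈ W v) ∧
      ∀ v ∉ S, (Valued.v ((Ic.comp Fv x v : Fv v)) : WithZero (Multiplicative ℤ)) = 1} =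
      {φ : Ilim Fv | ∀ v ∈ S, IDgrp.g Fv (Ilim.at Fv φ S) v ∈ W v} ∩
      {φ : Ilim Fv |
        (show Additive ↥(GDgrp Fv S) × ZSpart (A := A) S from Ilim.at Fv φ S).2 = 0} := by
    ext φ
    simp only [Set.mem_preimage, Set.mem_setOf_eq, Set.mem_inter_iff]
    constructor
    · rintro ⟨h1, h2⟩
      refine ⟨fun v hv => ?_, ?_⟩
      · have := h1 v hv
        rw [comp_einv, g_at_eq Fv φ S hv] at this
        exact this
      · refine Subtype.ext (funext fun v => ?_)
        show IDgrp.z Fv (Ilim.at Fv φ S) v = 0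
        by_cases hv : v ∈ S
        · exact z_zero_of_mem Fv _ hv
        · rw [z_at_eq Fv φ S hv, ← comp_einv Fv φ v]
          exact (valued_eq_one_iff Fv v _).1 (h2 v hv)
    · rintro ⟨h1, h2⟩
      refine ⟨fun v hv => ?_, fun v hv => ?_⟩
      · rw [comp_einv, g_at_eq Fv φ S hv]
        exact h1 v hv
      · have hz : IDgrp.z Fv (Ilim.at Fv φ S) v = 0 :=
          congrFun (congrArg (ZSpart.f (A := A)) h2) v
        rw [z_at_eq Fv φ S hv, ← comp_einv Fv φ v] at hz
        exact (valued_eq_one_iff Fv v _).2 hz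
  rw [hset]
  refine IsOpen.inter ?_ ?_
  · have : {φ : Ilim Fv | ∀ v ∈ S, IDgrp.g Fv (Ilim.at Fv φ S) v ∈ W v} =
        ⋂ v ∈ S, {φ : Ilim Fv | IDgrp.g Fv (Ilim.at Fv φ S) v ∈ W v} := by
      ext φ; simp
    rw [this]
    refine isOpen_biInter_finset fun v _ => ?_
    have hc : Continuous fun φ : Ilim Fv => IDgrp.g Fv (Ilim.at Fv φ S) v :=
      (continuous_apply v).comp (continuous_subtype_val.comp (continuous_toMul.comp
        (continuous_fst.comp ((continuous_apply S).comp continuous_subtype_val))))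
    exact hc.isOpen_preimage (W v) (hW v)
  · have hc : Continuous fun φ : Ilim Fv =>
        (show Additive ↥(GDgrp Fv S) × ZSpart (A := A) S from Ilim.at Fv φ S).2 :=
      continuous_snd.comp ((continuous_apply S).comp continuous_subtype_val)
    exact hc.isOpen_preimage {0} (isOpen_discrete _)

lemma isOpenMap_eMap : IsOpenMap (eMap Fv) := by
  intro U hU
  have himg : eMap Fv '' U = einv Fv ⁻¹' U :=
    congrFun (Set.image_eq_preimage_of_inverse (einv_eMap Fv) (eMap_einv Fv)) U
  rw [himg]
  exact (continuous_einv Fv).isOpen_preimage U hU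

lemma g_add {D : Finset (HeightOneSpectrum A)} (p q : IDgrp Fv D) (v : HeightOneSpectrum A) :
    IDgrp.g Fv (p + q) v = IDgrp.g Fv p v * IDgrp.g Fv q v := rfl

lemma z_add {D : Finset (HeightOneSpectrum A)} (p q : IDgrp Fv D) (v : HeightOneSpectrum A) :
    IDgrp.z Fv (p + q) v = IDgrp.z Fv p v + IDgrp.z Fv q v := rfl

/-- Let `F` be a number field or a global function field with ring of
integers `A` and `X = Spec A`, and let `F_v` (for `v` ranging over the closed points of
`X`, i.e. the height-one primes of `A`) be the henselization of `F` at `v` — modelled as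
a discretely valued henselian field extension of `F` whose valuation extends `v` and in
which `F` is dense.  Then the natural map from the classical restricted-product idele
group `I_c(F) = colim_S ∏_{v∈S} F_v^× × ∏_{v∉S} O_{F_v}^×` to the inverse limit
`I(F) = lim_U I(U ⊂ X)` of the relative idele groups
`I(U ⊂ X) = ⊕_{x∈|U|} ℤ ⊕ ⊕_{v∈X∖U} F_v^×` is an isomorphism of topological groups:
there is a bijective, continuous and open group homomorphism `e : I_c(F) → I(F)` sending
an idele `x` at level `U = X ∖ D` to its components `x_v ∈ F_v^×` for `v ∈ D` and to the
valuations `v(x_v) ∈ ℤ` at `v ∉ D`. -/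
theorem classical_ideles_iso_limit_ideles
    (hglobal : NumberField F ∨ ∃ p : ℕ, p.Prime ∧ CharP F p)
    (hhens : ∀ v, HenselianLocalRing
      ((Valued.v : Valuation (Fv v) (WithZero (Multiplicative ℤ))).valuationSubring))
    (hdisc : ∀ v, Function.Surjective
      (⇑(Valued.v : Valuation (Fv v) (WithZero (Multiplicative ℤ)))))
    (hcomp : ∀ v (x : F),
      (Valued.v (algebraMap F (Fv v) x) : WithZero (Multiplicative ℤ)) = v.valuation F x)
    (hdense : ∀ v (ξ : Fv v) (m : ℕ), ∃ b : F,
      (Valued.v (algebraMap F (Fv v) b - ξ) : WithZero (Multiplicative ℤ)) ≤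
        ↑(Multiplicative.ofAdd (-(m : ℤ)))) :
    ∃ e : Ic Fv → Ilim Fv,
      Function.Bijective e ∧ Continuous e ∧ IsOpenMap e ∧
      (∀ x y : Ic Fv, ∀ D, Ilim.at Fv (e (x * y)) D = Ilim.at Fv (e x) D + Ilim.at Fv (e y) D) ∧
      (∀ (x : Ic Fv) (D : Finset (HeightOneSpectrum A)),
        (∀ v, IDgrp.g Fv (Ilim.at Fv (e x) D) v = if v ∈ D then Ic.comp Fv x v else 1) ∧
        (∀ v, IDgrp.z Fv (Ilim.at Fv (e x) D) v =
          if v ∈ D then 0 else valUnit Fv v (Ic.comp Fv x v))) := by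
  refine ⟨eMap Fv, Function.bijective_iff_has_inverse.mpr
    ⟨einv Fv, einv_eMap Fv, eMap_einv Fv⟩,
    continuous_eMap Fv, isOpenMap_eMap Fv, ?_, ?_⟩
  · intro x y D
    refine IDext Fv (fun v => ?_) (fun v => ?_)
    · rw [g_add, at_eMap, at_eMap, at_eMap, g_icFun, g_icFun, g_icFun, Ic.comp_mul]
      by_cases hv : v ∈ D <;> simp [hv]
    · rw [z_add, at_eMap, at_eMap, at_eMap, z_icFun, z_icFun, z_icFun, Ic.comp_mul]
      by_cases hv : v ∈ D <;> simp [hv, valUnit_mul]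
  · intro x D
    exact ⟨fun v => by rw [at_eMap, g_icFun], fun v => by rw [at_eMap, z_icFun]⟩

end
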